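/- arXiv:1510.04463 — 2 statements merged into one kernel-verified Lean document; each statement's English description precedes it below -/
import Mathlib

section
/- Let G be a simple graph whose vertex set is V = X ⊔ Y with |X| = r, |Y| = s. Suppose that for all distinct x_i, x_j ∈ X and all distinct y_l, y_m ∈ Y: the restriction of Δ(G) to {x_i, y_l, x_j} is disconnected (has ≥ 2 components) and the restriction of Δ(G) to {y_l, x_j, y_m} is disconnected. Then G contains as a subgraph either the complete bipartite graph K_{r,s} on the bipartition (X, Y), or a complete multipartite graph K_{2,…,2,a,b} (with t ≥ 1 parts of size 2 and two parts of sizes a and b, 2t + a + b = r + s) on the vertex set V. -/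
open SimpleGraph

private lemma center_card {V : Type*} (H : SimpleGraph V) (a b c : V)
    (h1 : H.Adj a b) (h2 : H.Adj a c) :
    Nat.card ((H.induce ({a,b,c} : Set V)).ConnectedComponent) ≤ 1 := by
  have ha : a ∈ ({a,b,c} : Set V) := by simp
  have hreach : ∀ u : ({a,b,c} : Set V),
      (H.induce ({a,b,c} : Set V)).Reachable u ⟨a, ha⟩ := by
    rintro ⟨u, hu⟩
    simp only [Set.mem_insert_iff, Set.mem_singleton_iff] at hu
    rcases hu with rfl | rfl | rfl
    · exact Reachable.refl _
    · exact Adj.reachable (by simpa using h1.symm)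
    · exact Adj.reachable (by simpa using h2.symm)
  have hsub : Subsingleton ((H.induce ({a,b,c} : Set V)).ConnectedComponent) :=
    ⟨ConnectedComponent.ind₂ fun u v =>
      ConnectedComponent.sound ((hreach u).trans (hreach v).symm)⟩
  haveI := hsub
  rcases isEmpty_or_nonempty ((H.induce ({a,b,c} : Set V)).ConnectedComponent) with he | hn
  · rw [Nat.card_of_isEmpty]; omega
  · exact le_of_eq Nat.card_unique

private lemma key3 {V : Type*} (G : SimpleGraph V) {a b c : V}
    (hab : a ≠ b) (hac : a ≠ c) (hbc : b ≠ c)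
    (h : 2 ≤ Nat.card ((Gᶜ.induce ({a,b,c} : Set V)).ConnectedComponent))
    (hnab : ¬ G.Adj a b) : G.Adj a c ∧ G.Adj b c := by
  have hcab : Gᶜ.Adj a b := (G.compl_adj a b).mpr ⟨hab, hnab⟩
  constructor
  · by_contra hn
    have := center_card Gᶜ a b c hcab ((G.compl_adj a c).mpr ⟨hac, hn⟩)
    omega
  · by_contra hn
    have h2 := center_card Gᶜ b a c hcab.symm ((G.compl_adj b c).mpr ⟨hbc, hn⟩)
    have hset : ({b,a,c} : Set V) = {a,b,c} := by
      ext u; simp only [Set.mem_insert_iff, Set.mem_singleton_iff]; tauto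
    rw [hset] at h2
    omega

open scoped Classical in
private noncomputable def gp {V : Type*} (N : V → V → Prop) (v : V) : V :=
  if h : ∃ w, N v w then h.choose else v

private lemma gp_spec {V : Type*} (N : V → V → Prop) (v : V) (h : ∃ w, N v w) :
    N v (gp N v) := by rw [gp, dif_pos h]; exact h.choose_spec

private lemma gp_id {V : Type*} (N : V → V → Prop) (v : V) (h : ¬ ∃ w, N v w) :
    gp N v = v := by rw [gp, dif_neg h]

/-- Let `G` be a graph on `V = X ⊔ Y` with `|X| = r ≥ 1`, `|Y| = s ≥ 1`. If for all distinct
`x_i, x_j ∈ X` and all distinct `y_l, y_m ∈ Y` the restrictions of the independence complex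
of `G` to `{x_i, y_l, x_j}` and to `{y_l, x_j, y_m}` are disconnected (have at least 2
connected components), then `G` contains either the complete bipartite graph `K_{r,s}` on the
bipartition `(X, Y)` or a complete multipartite graph `K_{2,…,2,a,b}` (with `t ≥ 1` parts of
size 2 and two parts of sizes `a`, `b`, where `2t + a + b = r + s`) on the vertex set `V`. -/
theorem stmt10 {V : Type*} [Fintype V] [DecidableEq V] (G : SimpleGraph V)
    (X Y : Set V) (hd : Disjoint X Y) (hu : X ∪ Y = Set.univ)
    (r s : ℕ) (hr : 1 ≤ r) (hs : 1 ≤ s) (hX : X.ncard = r) (hY : Y.ncard = s)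
    (h1 : ∀ xi ∈ X, ∀ xj ∈ X, ∀ yl ∈ Y, xi ≠ xj →
      2 ≤ Nat.card ((Gᶜ.induce ({xi, yl, xj} : Set V)).ConnectedComponent))
    (h2 : ∀ yl ∈ Y, ∀ ym ∈ Y, ∀ xj ∈ X, yl ≠ ym →
      2 ≤ Nat.card ((Gᶜ.induce ({yl, xj, ym} : Set V)).ConnectedComponent)) :
    (∀ x ∈ X, ∀ y ∈ Y, G.Adj x y) ∨
    (∃ t a b : ℕ, 1 ≤ t ∧ 2 * t + a + b = r + s ∧
      ∃ p : V → Fin (t + 2),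
        (∀ i : Fin (t + 2), (i : ℕ) < t → (p ⁻¹' {i}).ncard = 2) ∧
        (p ⁻¹' {⟨t, by omega⟩}).ncard = a ∧
        (p ⁻¹' {⟨t + 1, by omega⟩}).ncard = b ∧
        (∀ x y : V, p x ≠ p y → G.Adj x y)) := by
  classical
  by_cases hK : ∀ x ∈ X, ∀ y ∈ Y, G.Adj x y
  · exact Or.inl hK
  right
  push_neg at hK
  obtain ⟨x0, hx0, y0, hy0, hnxy0⟩ := hK
  have hXY : ∀ v ∈ X, v ∉ Y := fun v hv hv' => Set.disjoint_left.mp hd hv hv'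
  have hmem : ∀ v : V, v ∈ X ∨ v ∈ Y := fun v => by
    have h : v ∈ X ∪ Y := by rw [hu]; exact Set.mem_univ v
    exact h
  set N : V → V → Prop :=
    fun v w => ¬G.Adj v w ∧ ((v ∈ X ∧ w ∈ Y) ∨ (v ∈ Y ∧ w ∈ X)) with hNdef
  have Nsymm : ∀ {v w : V}, N v w → N w v := by
    rintro v w ⟨ha, hb | hb⟩
    · exact ⟨fun h => ha h.symm, Or.inr ⟨hb.2, hb.1⟩⟩
    · exact ⟨fun h => ha h.symm, Or.inl ⟨hb.2, hb.1⟩⟩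
  have Nne : ∀ {v w : V}, N v w → v ≠ w := by
    rintro v w ⟨ha, hb | hb⟩ rfl
    · exact hXY v hb.1 hb.2
    · exact hXY v hb.2 hb.1
  have factA : ∀ {v w : V}, N v w → ∀ u, u ≠ v → u ≠ w → G.Adj v u ∧ G.Adj w u := by
    have base : ∀ v w : V, ¬G.Adj v w → v ∈ X → w ∈ Y → ∀ u, u ≠ v → u ≠ w →
        G.Adj v u ∧ G.Adj w u := by
      intro v w hn hvX hwY u huv huw
      have hvw : v ≠ w := fun h => hXY v hvX (h ▸ hwY)
      rcases hmem u with huX | huY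
      · exact key3 G hvw (Ne.symm huv) (fun h => hXY u huX (h ▸ hwY))
          (h1 v hvX u huX w hwY (Ne.symm huv)) hn
      · have hk := key3 G (Ne.symm hvw) (Ne.symm huw) (Ne.symm huv)
          (h2 w hwY u huY v hvX (Ne.symm huw)) (fun h => hn h.symm)
        exact ⟨hk.2, hk.1⟩
    rintro v w ⟨hn, ⟨hvX, hwY⟩ | ⟨hvY, hwX⟩⟩ u huv huw
    · exact base v w hn hvX hwY u huv huw
    · have h := base w v (fun h => hn h.symm) hwX hvY u huw huv
      exact ⟨h.2, h.1⟩
  have Nuniq : ∀ {v w w' : V}, N v w → N v w' → w = w' := by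
    intro v w w' h h'
    by_contra hne
    exact h'.1 (factA h w' (Ne.symm (Nne h')) (Ne.symm hne)).1
  have gpN : ∀ {v w : V}, N v w → gp N v = w := fun {v w} h =>
    Nuniq (gp_spec N v ⟨w, h⟩) h
  set Px : Set V := {v | v ∈ X ∧ ∃ w, N v w} with hPxdef
  set Fx : Finset V := Px.toFinite.toFinset with hFxdef
  have hFx : ∀ v : V, v ∈ Fx ↔ (v ∈ X ∧ ∃ w, N v w) := fun v => by
    rw [hFxdef, Set.Finite.mem_toFinset, hPxdef]; exact Iff.rfl
  set t : ℕ := Fx.card with htdef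
  have hx0P : x0 ∈ Fx := (hFx x0).mpr ⟨hx0, y0, hnxy0, Or.inl ⟨hx0, hy0⟩⟩
  have ht1 : 1 ≤ t := Finset.card_pos.mpr ⟨x0, hx0P⟩
  have ecard : Fintype.card {x // x ∈ Fx} = t := Fintype.card_coe Fx
  set e : {x // x ∈ Fx} ≃ Fin t := Fintype.equivFinOfCardEq ecard with hedef
  set rep : V → V := fun v => if v ∈ X then v else gp N v with hrepdef
  set p : V → Fin (t+2) := fun v =>
    if hv : rep v ∈ Fx then Fin.castLE (by omega) (e ⟨rep v, hv⟩)
    else if v ∈ X then ⟨t, by omega⟩ else ⟨t+1, by omega⟩ with hpdef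
  have repX : ∀ v ∈ X, rep v = v := fun v hv => by
    rw [hrepdef]; simp only []; rw [if_pos hv]
  have repY : ∀ v : V, v ∉ X → rep v = gp N v := fun v hv => by
    rw [hrepdef]; simp only []; rw [if_neg hv]
  have pval1 : ∀ (v u : V) (hu' : u ∈ Fx), rep v = u →
      p v = Fin.castLE (by omega) (e ⟨u, hu'⟩) := by
    intro v u hu' hrep
    rw [hpdef]
    simp only [hrep]
    rw [dif_pos hu']
  have pval2 : ∀ v ∈ X, rep v ∉ Fx → p v = ⟨t, by omega⟩ := by
    intro v hv hnv
    rw [hpdef]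
    simp only []
    rw [dif_neg hnv, if_pos hv]
  have pval3 : ∀ v : V, v ∉ X → rep v ∉ Fx → p v = ⟨t+1, by omega⟩ := by
    intro v hv hnv
    rw [hpdef]
    simp only []
    rw [dif_neg hnv, if_neg hv]
  have statMY : ∀ (v w : V), N v w → v ∈ Y → rep v = w ∧ w ∈ Fx := by
    intro v w hvw hvY
    have hvnX : v ∉ X := fun h => hXY v h hvY
    have hwX : w ∈ X := by
      rcases hvw.2 with ⟨h', -⟩ | ⟨-, h'⟩
      · exact absurd h' hvnX
      · exact h'
    refine ⟨?_, (hFx w).mpr ⟨hwX, v, Nsymm hvw⟩⟩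
    rw [repY v hvnX, gpN hvw]
  have statU : ∀ v : V, (¬∃ w, N v w) → rep v = v ∧ rep v ∉ Fx := by
    intro v hnv
    have hrv : rep v = v := by
      by_cases hvX : v ∈ X
      · exact repX v hvX
      · rw [repY v hvX, gp_id N v hnv]
    refine ⟨hrv, ?_⟩
    rw [hrv]
    intro hmem'
    exact hnv ((hFx v).mp hmem').2
  -- fiber description for small indices
  have fiber2 : ∀ (j : Fin (t+2)) (hj : (j : ℕ) < t),
      p ⁻¹' {j} = {(e.symm ⟨(j : ℕ), hj⟩ : V), gp N (e.symm ⟨(j : ℕ), hj⟩ : V)} := by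
    intro j hj
    set xj : V := (e.symm ⟨(j : ℕ), hj⟩ : V) with hxj
    have hxjF : xj ∈ Fx := (e.symm ⟨(j : ℕ), hj⟩).2
    obtain ⟨hxjX, wj, hNwj⟩ := (hFx xj).mp hxjF
    set yj : V := gp N xj with hyj
    have hNxy : N xj yj := by rw [hyj]; exact gp_spec N xj ⟨wj, hNwj⟩
    have hyjY : yj ∈ Y := by
      rcases hNxy.2 with ⟨-, h'⟩ | ⟨h', -⟩
      · exact h'
      · exact (hXY xj hxjX h').elim
    have hpxj : p xj = j := by
      rw [pval1 xj xj hxjF (repX xj hxjX)]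
      have h1' : (⟨xj, hxjF⟩ : {x // x ∈ Fx}) = e.symm ⟨(j : ℕ), hj⟩ := Subtype.ext hxj
      rw [h1', Equiv.apply_symm_apply]
      exact Fin.ext rfl
    have hpyj : p yj = j := by
      rw [pval1 yj xj hxjF (statMY yj xj (Nsymm hNxy) hyjY).1]
      have h1' : (⟨xj, hxjF⟩ : {x // x ∈ Fx}) = e.symm ⟨(j : ℕ), hj⟩ := Subtype.ext hxj
      rw [h1', Equiv.apply_symm_apply]
      exact Fin.ext rfl
    ext v
    simp only [Set.mem_preimage, Set.mem_singleton_iff, Set.mem_insert_iff]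
    constructor
    · intro hpv
      by_cases hex : ∃ w, N v w
      · by_cases hvX : v ∈ X
        · left
          have hvF : v ∈ Fx := (hFx v).mpr ⟨hvX, hex⟩
          rw [pval1 v v hvF (repX v hvX)] at hpv
          have heq : e ⟨v, hvF⟩ = ⟨(j : ℕ), hj⟩ := by
            apply Fin.ext
            simpa using congrArg Fin.val hpv
          have hv'' : (⟨v, hvF⟩ : {x // x ∈ Fx}) = e.symm ⟨(j : ℕ), hj⟩ :=
            e.eq_symm_apply.mpr heq
          exact (congrArg Subtype.val hv'').trans hxj.symm
        · right
          have hvY : v ∈ Y := (hmem v).resolve_left hvX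
          obtain ⟨w, hw⟩ := hex
          have hst := statMY v w hw hvY
          rw [pval1 v w hst.2 hst.1] at hpv
          have heq : e ⟨w, hst.2⟩ = ⟨(j : ℕ), hj⟩ := by
            apply Fin.ext
            simpa using congrArg Fin.val hpv
          have hwxj : w = xj := by
            have hv'' : (⟨w, hst.2⟩ : {x // x ∈ Fx}) = e.symm ⟨(j : ℕ), hj⟩ :=
              e.eq_symm_apply.mpr heq
            exact (congrArg Subtype.val hv'').trans hxj.symm
          have hgv : gp N xj = v := gpN (hwxj ▸ Nsymm hw)
          exact (hyj.trans hgv).symm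
      · exfalso
        obtain ⟨-, hnF⟩ := statU v hex
        by_cases hvX : v ∈ X
        · rw [pval2 v hvX hnF] at hpv
          have hval : t = (j : ℕ) := congrArg Fin.val hpv
          omega
        · rw [pval3 v hvX hnF] at hpv
          have hval : t + 1 = (j : ℕ) := congrArg Fin.val hpv
          omega
    · rintro (rfl | rfl)
      · exact hpxj
      · exact hpyj
  have hfibcard : ∀ i : Fin (t+2), (i : ℕ) < t → (p ⁻¹' {i}).ncard = 2 := by
    intro i hi
    rw [fiber2 i hi]
    have hxjF : ((e.symm ⟨(i : ℕ), hi⟩ : {x // x ∈ Fx}) : V) ∈ Fx := (e.symm ⟨(i : ℕ), hi⟩).2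
    obtain ⟨-, hex⟩ := (hFx _).mp hxjF
    exact Set.ncard_pair (Nne (gp_spec N _ hex))
  have hedge : ∀ v w : V, p v ≠ p w → G.Adj v w := by
    intro v w hne
    by_contra hnadj
    have hvw : v ≠ w := fun h => hne (by rw [h])
    apply hne
    rcases hmem v with hvX | hvY <;> rcases hmem w with hwX | hwY
    · have hv' : ¬∃ u, N v u := by
        rintro ⟨u, hu⟩
        have huY : u ∈ Y := by
          rcases hu.2 with ⟨-, h'⟩ | ⟨h', -⟩
          · exact h'
          · exact (hXY v hvX h').elim
        exact hnadj (factA hu w (Ne.symm hvw) (fun h => hXY w hwX (h ▸ huY))).1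
      have hw' : ¬∃ u, N w u := by
        rintro ⟨u, hu⟩
        have huY : u ∈ Y := by
          rcases hu.2 with ⟨-, h'⟩ | ⟨h', -⟩
          · exact h'
          · exact (hXY w hwX h').elim
        exact hnadj (factA hu v hvw (fun h => hXY v hvX (h ▸ huY))).1.symm
      rw [pval2 v hvX (statU v hv').2, pval2 w hwX (statU w hw').2]
    · have hN' : N v w := ⟨hnadj, Or.inl ⟨hvX, hwY⟩⟩
      have hvF : v ∈ Fx := (hFx v).mpr ⟨hvX, w, hN'⟩
      have h2' := statMY w v (Nsymm hN') hwY
      rw [pval1 v v hvF (repX v hvX), pval1 w v h2'.2 h2'.1]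
    · have hN' : N w v := ⟨fun h => hnadj h.symm, Or.inl ⟨hwX, hvY⟩⟩
      have hwF : w ∈ Fx := (hFx w).mpr ⟨hwX, v, hN'⟩
      have h2' := statMY v w (Nsymm hN') hvY
      rw [pval1 v w h2'.2 h2'.1, pval1 w w hwF (repX w hwX)]
    · have hv' : ¬∃ u, N v u := by
        rintro ⟨u, hu⟩
        have huX : u ∈ X := by
          rcases hu.2 with ⟨h', -⟩ | ⟨-, h'⟩
          · exact (hXY v h' hvY).elim
          · exact h'
        exact hnadj (factA hu w (Ne.symm hvw) (fun h => hXY u huX (h ▸ hwY))).1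
      have hw' : ¬∃ u, N w u := by
        rintro ⟨u, hu⟩
        have huX : u ∈ X := by
          rcases hu.2 with ⟨h', -⟩ | ⟨-, h'⟩
          · exact (hXY w h' hwY).elim
          · exact h'
        exact hnadj (factA hu v hvw (fun h => hXY u huX (h ▸ hvY))).1.symm
      have hvnX : v ∉ X := fun h => hXY v h hvY
      have hwnX : w ∉ X := fun h => hXY w h hwY
      rw [pval3 v hvnX (statU v hv').2, pval3 w hwnX (statU w hw').2]
  have hcards : ∀ i : Fin (t+2),
      (p ⁻¹' {i}).ncard = (Finset.univ.filter fun v => p v = i).card := by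
    intro i
    rw [← Set.ncard_coe_finset]
    congr 1
    ext v
    simp
  have hterm : ∀ i : Fin t,
      (Finset.univ.filter fun v => p v = (i.castSucc.castSucc)).card = 2 := by
    intro i
    rw [← hcards, hfibcard]
    simp
  have htot : Fintype.card V =
      ∑ i : Fin (t+2), (Finset.univ.filter fun v => p v = i).card := by
    rw [← Finset.card_univ]
    exact Finset.card_eq_sum_card_fiberwise (fun v _ => Finset.mem_univ (p v))
  have hsplit : ∑ i : Fin (t+2), (Finset.univ.filter fun v => p v = i).card
      = 2 * t + (Finset.univ.filter fun v => p v = (Fin.last t).castSucc).card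
        + (Finset.univ.filter fun v => p v = Fin.last (t+1)).card := by
    rw [Fin.sum_univ_castSucc, Fin.sum_univ_castSucc,
      Finset.sum_congr rfl (fun i _ => hterm i), Finset.sum_const, smul_eq_mul,
      Finset.card_univ, Fintype.card_fin]
    ring
  have hV : Fintype.card V = r + s := by
    rw [← Nat.card_eq_fintype_card, ← Set.ncard_univ, ← hu,
      Set.ncard_union_eq hd (Set.toFinite X) (Set.toFinite Y), hX, hY]
  have hmain : ∀ (hA : t < t + 2) (hB : t + 1 < t + 2),
      2 * t + (p ⁻¹' {(⟨t, hA⟩ : Fin (t+2))}).ncard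
        + (p ⁻¹' {(⟨t+1, hB⟩ : Fin (t+2))}).ncard = r + s := by
    intro hA hB
    have e1 : (p ⁻¹' {(⟨t, hA⟩ : Fin (t+2))}).ncard
        = (Finset.univ.filter fun v => p v = (Fin.last t).castSucc).card :=
      hcards ((Fin.last t).castSucc)
    have e2 : (p ⁻¹' {(⟨t+1, hB⟩ : Fin (t+2))}).ncard
        = (Finset.univ.filter fun v => p v = Fin.last (t+1)).card :=
      hcards (Fin.last (t+1))
    rw [e1, e2]
    rw [hsplit] at htot
    rw [hV] at htot
    omega
  exact ⟨t, _, _, ht1, hmain (by omega) (by omega), p, hfibcard, rfl, rfl, hedge⟩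
end

section
/- In the complete tripartite graph K_{2,2,2} with parts X_1, X_2, X_3, for three distinct vertices x_i, x_j, x_k: if they lie in three distinct parts, the restriction of the independence complex to {x_i, x_j, x_k} has 3 connected components (so β_{1} at this multidegree equals 2); if exactly two of them lie in the same part, the restriction has 2 connected components (so β_1 equals 1). In particular, the first multigraded Betti numbers of K_{2,2,2} and K_{3,3} differ at some squarefree degree of size 3, even though K_{2,2,2} has a nonzero Betti number at every multidegree where K_{3,3} does. -/
/-- In the complete tripartite graph `K_{2,2,2}` (parts = fibers of `p`, each of size 2), for
three distinct vertices `x, y, z`: if they lie in three distinct parts, the restriction of the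
independence complex to `{x, y, z}` has 3 connected components (so `β₁ = 2` at this
multidegree); if exactly two of them lie in the same part, it has 2 connected components (so
`β₁ = 1`). (Components of the complex coincide with those of the induced subgraph of `Gᶜ`.) -/
theorem stmt14 {V : Type*} [Fintype V] [DecidableEq V]
    (p : V → Fin 3) (hp : ∀ t : Fin 3, (p ⁻¹' {t}).ncard = 2)
    (G : SimpleGraph V) (hG : ∀ x y, G.Adj x y ↔ p x ≠ p y)
    (x y z : V) (hxy : x ≠ y) (hyz : y ≠ z) (hxz : x ≠ z) :
    ((p x ≠ p y ∧ p y ≠ p z ∧ p x ≠ p z) →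
      Nat.card ((Gᶜ.induce ({x, y, z} : Set V)).ConnectedComponent) = 3) ∧
    ((p x = p y ∧ p x ≠ p z) →
      Nat.card ((Gᶜ.induce ({x, y, z} : Set V)).ConnectedComponent) = 2) := by
  set S : Set V := {x, y, z} with hS
  set G' : SimpleGraph S := Gᶜ.induce S with hG'
  have hadj : ∀ u v : S, G'.Adj u v ↔ (u : V) ≠ (v : V) ∧ p (u : V) = p (v : V) := by
    intro u v
    constructor
    · intro h
      rcases h with ⟨hne, hnadj⟩
      refine ⟨hne, ?_⟩
      by_contra hpp
      exact hnadj ((hG _ _).2 hpp)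
    · intro ⟨hne, hpp⟩
      exact ⟨hne, fun h => ((hG _ _).1 h) hpp⟩
  have hxS : x ∈ S := by simp [hS]
  have hyS : y ∈ S := by simp [hS]
  have hzS : z ∈ S := by simp [hS]
  have hmem : ∀ u : S, (u : V) = x ∨ (u : V) = y ∨ (u : V) = z := by
    rintro ⟨u, hu⟩; simpa [hS] using hu
  constructor
  · rintro ⟨h1, h2, h3⟩
    -- no edges at all
    have hno : ∀ u v : S, ¬ G'.Adj u v := by
      intro u v h
      rw [hadj] at h
      rcases h with ⟨hne, hpp⟩
      rcases hmem u with hu | hu | hu <;> rcases hmem v with hv | hv | hv <;>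
        simp_all
    have hinj : Function.Injective (G'.connectedComponentMk) := by
      intro u v h
      have hr : G'.Reachable u v := (SimpleGraph.ConnectedComponent.eq).1 h
      refine hr.elim fun w => ?_
      cases w with
      | nil => rfl
      | cons h _ => exact absurd h (hno _ _)
    have hb : Function.Bijective (G'.connectedComponentMk) :=
      ⟨hinj, fun c => Quot.exists_rep c⟩
    have hcard := Nat.card_eq_of_bijective _ hb
    rw [← hcard]
    have : Nat.card S = 3 := by
      rw [Nat.card_coe_set_eq, hS]
      rw [Set.ncard_insert_of_notMem (by simp [hxy, hxz]) (Set.toFinite _),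
        Set.ncard_pair hyz]
    exact this
  · rintro ⟨h1, h2⟩
    have h3 : p y ≠ p z := h1 ▸ h2
    set a : S := ⟨x, hxS⟩
    set b : S := ⟨y, hyS⟩
    set c : S := ⟨z, hzS⟩
    have hab : G'.Adj a b := (hadj a b).2 ⟨hxy, h1⟩
    -- invariant function
    have hfun : ∀ u v : S, G'.Adj u v → (p (u : V) = p z) = (p (v : V) = p z) := by
      intro u v h
      rw [hadj] at h
      rw [h.2]
    have hconst : ∀ {u v : S} (w : G'.Walk u v), p (u : V) = p (v : V) := by
      intro u v w
      induction w with
      | nil => rfl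
      | cons h q ih => exact (((hadj _ _).1 h).2).trans ih
    let f : G'.ConnectedComponent → Prop :=
      SimpleGraph.ConnectedComponent.lift (fun u => p (u : V) = p z) (by
        intro u v w _
        simp only [hconst w])
    rw [Nat.card_eq_two_iff]
    refine ⟨G'.connectedComponentMk a, G'.connectedComponentMk c, ?_, ?_⟩
    · intro h
      have hfc : p x = p z := by
        have := congrArg f h
        simpa [f, a, c] using this
      exact h2 hfc
    · ext w
      simp only [Set.mem_insert_iff, Set.mem_singleton_iff, Set.mem_univ, iff_true]
      refine SimpleGraph.ConnectedComponent.ind (fun u => ?_) w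
      rcases hmem u with hu | hu | hu
      · left
        congr 1
        exact Subtype.ext hu
      · left
        have hub : u = b := Subtype.ext hu
        rw [hub]
        exact (SimpleGraph.ConnectedComponent.eq).2 hab.symm.reachable
      · right
        congr 1
        exact Subtype.ext hu
end
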